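/- Let A be an invertible d×d real matrix, N a d×d real matrix, and C_0, …, C_{p−1} d×d real matrices whose companion block matrix M satisfies ρ(M) < 1. Let E_p denote the pd×d matrix consisting of p−1 zero d×d blocks stacked above an identity block I_d. Then E_p^⊤ (I_{pd} − M)^{-1} E_p N = −A^{-1} if and only if N is invertible and ∑_{k=0}^{p−1} C_k = I_d + N A. (Equivalently: for every b ∈ ℝ^d, the iteration z^{k+1} = M z^k + E_p N b converges and the last d coordinates of its limit equal −A^{-1} b, if and only if ∑_{k=0}^{p−1} C_k = I_d + N A with N invertible.) -/

import Mathlib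

/-- The companion block matrix of `d×d` matrices `C 0, …, C (p-1)`: the `pd×pd`
block matrix with identity blocks `I_d` on the block superdiagonal, bottom block
row `(C 0, C 1, …, C (p-1))`, and zero blocks elsewhere. -/
def companion {p d : ℕ} {R : Type*} [CommRing R]
    (C : Fin p → Matrix (Fin d) (Fin d) R) :
    Matrix (Fin p × Fin d) (Fin p × Fin d) R :=
  Matrix.of fun x y =>
    if (x.1 : ℕ) + 1 = p then (C y.1) x.2 y.2
    else if (y.1 : ℕ) = (x.1 : ℕ) + 1 then (if x.2 = y.2 then 1 else 0) else 0

/-- The `pd×d` matrix `E_p = (0_d, …, 0_d, I_d)ᵀ`: `p-1` zero `d×d` blocks stacked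
above an identity block `I_d`. -/
def Emat (p d : ℕ) (R : Type*) [CommRing R] : Matrix (Fin p × Fin d) (Fin d) R :=
  Matrix.of fun x b => if (x.1 : ℕ) + 1 = p ∧ x.2 = b then 1 else 0

/-- The spectral radius of a square real matrix: the maximum modulus of its
complex eigenvalues (the spectrum of the matrix viewed as a complex matrix). -/
noncomputable def specRadR {m : Type*} [Fintype m] [DecidableEq m]
    (M : Matrix m m ℝ) : ℝ :=
  sSup ((fun z : ℂ => ‖z‖) '' spectrum ℂ (M.map Complex.ofReal))

lemma isUnit_one_sub_of_specRadR_lt_one {m : Type*} [Fintype m] [DecidableEq m]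
    {M : Matrix m m ℝ} (h : specRadR M < 1) : IsUnit (1 - M) := by
  rw [Matrix.isUnit_iff_isUnit_det, isUnit_iff_ne_zero]
  intro hdet
  have h1 : (1 : ℂ) ∈ spectrum ℂ (M.map Complex.ofReal) := by
    rw [spectrum.mem_iff, Matrix.isUnit_iff_isUnit_det, isUnit_iff_ne_zero]
    push_neg
    have heq : (algebraMap ℂ (Matrix m m ℂ)) 1 - M.map Complex.ofReal
        = Complex.ofRealHom.mapMatrix (1 - M) := by
      rw [map_one, map_sub, map_one, RingHom.mapMatrix_apply]
      rfl
    rw [heq, ← RingHom.map_det, hdet, map_zero]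
  have hmem : (1:ℝ) ∈ (fun z : ℂ => ‖z‖) '' spectrum ℂ (M.map Complex.ofReal) :=
    ⟨1, h1, by simp⟩
  have hb : BddAbove ((fun z : ℂ => ‖z‖) '' spectrum ℂ (M.map Complex.ofReal)) :=
    ((Matrix.finite_spectrum _).image _).bddAbove
  have hle := le_csSup hb hmem
  rw [specRadR] at h
  linarith

/-- The "stacked identity blocks" matrix. -/
def Gmat (p d : ℕ) (R : Type*) [CommRing R] : Matrix (Fin p × Fin d) (Fin d) R :=
  Matrix.of fun x b => if x.2 = b then 1 else 0

lemma key_identity {p d : ℕ} (hp : 0 < p) (C : Fin p → Matrix (Fin d) (Fin d) ℝ) :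
    (1 - companion C) * Gmat p d ℝ = Emat p d ℝ * (1 - ∑ k : Fin p, C k) := by
  ext x b
  rw [Matrix.sub_mul, Matrix.sub_apply, Matrix.one_mul]
  have hMG : (companion C * Gmat p d ℝ) x b =
      if (x.1 : ℕ) + 1 = p then (∑ k : Fin p, C k) x.2 b
      else if x.2 = b then 1 else 0 := by
    rw [Matrix.mul_apply, Fintype.sum_prod_type]
    by_cases hx : (x.1 : ℕ) + 1 = p
    · simp only [companion, Gmat, Matrix.of_apply, hx, if_true, mul_ite, mul_one, mul_zero]
      simp [Matrix.sum_apply, Finset.sum_ite_eq, Finset.sum_ite_eq']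
    · have hlt : (x.1 : ℕ) + 1 < p := lt_of_le_of_ne x.1.isLt hx
      simp only [companion, Gmat, Matrix.of_apply, hx, if_false, ite_mul, one_mul, zero_mul]
      have hcond : ∀ y1 : Fin p, ((y1 : ℕ) = (x.1 : ℕ) + 1) ↔ y1 = ⟨(x.1 : ℕ) + 1, hlt⟩ := by
        intro y1; rw [Fin.ext_iff]
      simp only [hcond]
      rw [Finset.sum_eq_single (⟨(x.1 : ℕ) + 1, hlt⟩ : Fin p)]
      · simp [Finset.sum_ite_eq]
      · intro y1 _ hy1; simp [hy1]
      · intro habs; exact absurd (Finset.mem_univ _) habs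
  rw [hMG, Matrix.mul_apply]
  by_cases hx : (x.1 : ℕ) + 1 = p
  · simp only [Emat, Matrix.of_apply, hx, true_and, Gmat]
    simp [Matrix.sub_apply, Matrix.one_apply, Finset.sum_ite_eq, Finset.sum_ite_eq', ite_mul]
  · simp only [Emat, Matrix.of_apply, hx, false_and, if_false, Gmat]
    simp

lemma EtG {p d : ℕ} (hp : 0 < p) :
    (Emat p d ℝ).transpose * Gmat p d ℝ = 1 := by
  ext a b
  rw [Matrix.mul_apply, Fintype.sum_prod_type]
  have hlast : ∀ y1 : Fin p, ((y1 : ℕ) + 1 = p) ↔ y1 = ⟨p - 1, Nat.sub_lt hp one_pos⟩ := by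
    intro y1; rw [Fin.ext_iff]; have := y1.isLt; constructor <;> (intro; simp_all; omega)
  simp only [Emat, Gmat, Matrix.transpose_apply, Matrix.of_apply, hlast]
  rw [Finset.sum_eq_single (⟨p - 1, Nat.sub_lt hp one_pos⟩ : Fin p)]
  · simp [Matrix.one_apply, Finset.sum_ite_eq, eq_comm]
  · intro y1 _ hy1; simp [hy1]
  · intro habs; exact absurd (Finset.mem_univ _) habs

theorem stmt_10 {p d : ℕ} (hp : 0 < p)
    (A N : Matrix (Fin d) (Fin d) ℝ) (hA : IsUnit A)
    (C : Fin p → Matrix (Fin d) (Fin d) ℝ)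
    (hρ : specRadR (companion C) < 1) :
    (Emat p d ℝ).transpose * (1 - companion C)⁻¹ * (Emat p d ℝ) * N = -A⁻¹ ↔
      (IsUnit N ∧ ∑ k : Fin p, C k = 1 + N * A) := by
  set B : Matrix (Fin d) (Fin d) ℝ := 1 - ∑ k : Fin p, C k with hBdef
  have hM : IsUnit (1 - companion C) := isUnit_one_sub_of_specRadR_lt_one hρ
  have hMdet : IsUnit (1 - companion C).det := (Matrix.isUnit_iff_isUnit_det _).mp hM
  have hAdet : IsUnit A.det := (Matrix.isUnit_iff_isUnit_det _).mp hA
  have hkey := key_identity hp C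
  -- B is a unit
  have hB : IsUnit B := by
    rw [Matrix.isUnit_iff_isUnit_det, isUnit_iff_ne_zero]
    intro hdet
    obtain ⟨w, hw0, hw⟩ := (Matrix.exists_mulVec_eq_zero_iff).mpr hdet
    have hz : (1 - companion C).mulVec ((Gmat p d ℝ).mulVec w) = 0 := by
      rw [Matrix.mulVec_mulVec, hkey, ← Matrix.mulVec_mulVec, hw, Matrix.mulVec_zero]
    have hz0 : (Gmat p d ℝ).mulVec w = 0 := by
      have := congrArg (fun v => (1 - companion C)⁻¹.mulVec v) hz
      simpa [Matrix.mulVec_mulVec, ← Matrix.mul_assoc, Matrix.nonsing_inv_mul _ hMdet] using this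
    apply hw0
    ext j
    have := congrFun hz0 (⟨⟨0, hp⟩, j⟩ : Fin p × Fin d)
    simpa [Gmat, Matrix.mulVec, dotProduct, Finset.sum_ite_eq] using this
  have hBdet : IsUnit B.det := (Matrix.isUnit_iff_isUnit_det _).mp hB
  -- the key reduction: Eᵀ (1-M)⁻¹ E = B⁻¹
  have hinvE : (1 - companion C)⁻¹ * Emat p d ℝ = Gmat p d ℝ * B⁻¹ := by
    have h1 : Emat p d ℝ = (1 - companion C) * (Gmat p d ℝ * B⁻¹) := by
      rw [← Matrix.mul_assoc, hkey, Matrix.mul_assoc, Matrix.mul_nonsing_inv _ hBdet,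
        Matrix.mul_one]
    rw [h1, ← Matrix.mul_assoc, Matrix.nonsing_inv_mul _ hMdet, Matrix.one_mul]
  have hred : (Emat p d ℝ).transpose * (1 - companion C)⁻¹ * Emat p d ℝ = B⁻¹ := by
    rw [Matrix.mul_assoc, hinvE, ← Matrix.mul_assoc, EtG hp, Matrix.one_mul]
  rw [hred]
  constructor
  · intro h
    have hN : N = B * (-A⁻¹) := by
      calc N = (B * B⁻¹) * N := by rw [Matrix.mul_nonsing_inv _ hBdet, Matrix.one_mul]
        _ = B * (B⁻¹ * N) := by rw [Matrix.mul_assoc]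
        _ = B * (-A⁻¹) := by rw [h]
    have hNA : N * A = -B := by
      rw [hN, mul_neg, neg_mul, Matrix.mul_assoc,
        Matrix.nonsing_inv_mul _ hAdet, Matrix.mul_one]
    constructor
    · rw [hN]
      exact hB.mul ((Matrix.isUnit_nonsing_inv_iff.mpr hA).neg)
    · rw [hNA, hBdef]; abel
  · rintro ⟨hNu, hsum⟩
    have hBNA : B = -(N * A) := by rw [hBdef, hsum]; abel
    have hN : B * (-A⁻¹) = N := by
      rw [hBNA, neg_mul_neg, Matrix.mul_assoc,
        Matrix.mul_nonsing_inv _ hAdet, Matrix.mul_one]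
    rw [← hN, ← Matrix.mul_assoc, Matrix.nonsing_inv_mul _ hBdet, Matrix.one_mul]
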